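/- Let g be convex lsc and f convex differentiable, and let x^{k+1} = prox_{α_k g}(x^k - α_k ∇f(x^k)) with implicit subgradients u^k ∈ ∂g(x^k), u^{k+1} ∈ ∂g(x^{k+1}). Then for any minimizer x* of F = f + g: ‖x^{k+1} - x*‖² + 2α_k(F(x^k) - F(x*)) ≤ ‖x^k - x*‖² + α_k² ‖∇f(x^k) + u^k‖². -/

import Mathlib

open scoped RealInnerProductSpace

/-- Gradient inequality for a convex differentiable function. -/
lemma grad_convex_ineq {d : ℕ} (f : EuclideanSpace ℝ (Fin d) → ℝ)
    (hf : ConvexOn ℝ Set.univ f) (x y fx' : EuclideanSpace ℝ (Fin d))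
    (h : HasGradientAt f fx' x) :
    f x + ⟪fx', y - x⟫ ≤ f y := by
  set φ : ℝ → ℝ := fun t => f (x + t • (y - x)) with hφdef
  have hline : HasDerivAt (fun t : ℝ => x + t • (y - x)) (y - x) 0 := by
    simpa using ((hasDerivAt_id (0:ℝ)).smul_const (y - x)).const_add x
  have hF : HasFDerivAt f (InnerProductSpace.toDual ℝ _ fx') x := h.hasFDerivAt
  have hF' : HasFDerivAt f (InnerProductSpace.toDual ℝ _ fx')
      ((fun t : ℝ => x + t • (y - x)) 0) := by simpa using hF
  have hφ : HasDerivAt φ ⟪fx', y - x⟫ 0 := by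
    have := hF'.comp_hasDerivAt (0:ℝ) hline
    simp [InnerProductSpace.toDual_apply_apply] at this; exact this
  have hφc : ConvexOn ℝ Set.univ φ := by
    have := hf.comp_affineMap (AffineMap.lineMap x y)
    have heq : φ = f ∘ (AffineMap.lineMap x y) := by
      funext t
      simp [hφdef, AffineMap.lineMap_apply]
      congr 1
      module
    rw [heq]
    simpa using this
  have hs := hφc.le_slope_of_hasDerivAt (Set.mem_univ (0:ℝ)) (Set.mem_univ (1:ℝ))
    one_pos hφ
  have hslope : slope φ 0 1 = f y - f x := by
    simp [slope_def_field, hφdef]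
  rw [hslope] at hs
  linarith

theorem prox_grad_basic_inequality {d : ℕ}
    (f g : EuclideanSpace ℝ (Fin d) → ℝ)
    (f' : EuclideanSpace ℝ (Fin d) → EuclideanSpace ℝ (Fin d))
    (hfconv : ConvexOn ℝ Set.univ f)
    (hgconv : ConvexOn ℝ Set.univ g)
    (hglsc : LowerSemicontinuous g)
    (hgrad : ∀ z, HasGradientAt f (f' z) z)
    (αk : ℝ) (hαk : 0 < αk)
    (xk x1 u u1 xstar : EuclideanSpace ℝ (Fin d))
    -- u = u^k ∈ ∂g(x^k), u1 = u^{k+1} ∈ ∂g(x^{k+1})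
    (hu : ∀ y, g xk + ⟪u, y - xk⟫ ≤ g y)
    (hu1 : ∀ y, g x1 + ⟪u1, y - x1⟫ ≤ g y)
    -- x^{k+1} = prox_{α_k g}(x^k - α_k ∇f(x^k)), implicitly:
    (hx1 : x1 = xk - αk • (f' xk + u1))
    -- x* minimizes F = f + g
    (hmin : ∀ y, f xstar + g xstar ≤ f y + g y) :
    ‖x1 - xstar‖ ^ 2 + 2 * αk * ((f xk + g xk) - (f xstar + g xstar)) ≤
      ‖xk - xstar‖ ^ 2 + αk ^ 2 * ‖f' xk + u‖ ^ 2 := by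
  set G := f' xk + u1 with hG
  set p := xk - xstar with hp
  set w := u - u1 with hw
  -- norm expansions
  have h1 : ‖x1 - xstar‖ ^ 2 = ‖p‖ ^ 2 - 2 * (αk * ⟪p, G⟫) + αk ^ 2 * ‖G‖ ^ 2 := by
    have : x1 - xstar = p - αk • G := by
      rw [hx1]; show xk - αk • G - xstar = xk - xstar - αk • G; abel
    rw [this, norm_sub_sq_real, real_inner_smul_right, norm_smul]
    simp [mul_pow, sq_abs]
  have h2 : ‖f' xk + u‖ ^ 2 = ‖G‖ ^ 2 + 2 * ⟪G, w⟫ + ‖w‖ ^ 2 := by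
    have : f' xk + u = G + w := by rw [hG, hw]; abel
    rw [this, norm_add_sq_real]
  -- gradient inequality for f
  have hA : f xk + ⟪f' xk, xstar - xk⟫ ≤ f xstar :=
    grad_convex_ineq f hfconv xk xstar (f' xk) (hgrad xk)
  have hB := hu1 xstar
  have hC := hu x1
  -- rewrite inner products
  have e1 : ⟪f' xk, xstar - xk⟫ + ⟪u1, xstar - x1⟫ + ⟪u, x1 - xk⟫
      = -⟪p, G⟫ - αk * ⟪G, w⟫ := by
    have hx1s : xstar - x1 = -p + αk • G := by
      rw [hx1]; show xstar - (xk - αk • G) = -(xk - xstar) + αk • G; abel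
    have hx1k : x1 - xk = -(αk • G) := by rw [hx1]; abel
    rw [hx1s, hx1k]
    simp only [inner_add_right, inner_neg_right, real_inner_smul_right, hG, hw, hp]
    simp only [inner_add_left, inner_sub_left, inner_sub_right, inner_add_right]
    rw [real_inner_comm xk (f' xk), real_inner_comm xstar (f' xk),
      real_inner_comm xk u1, real_inner_comm xstar u1, real_inner_comm u1 u, real_inner_comm (f' xk) u1, real_inner_comm (f' xk) u]
    ring
  -- key inequality
  have key : (f xk + g xk) - (f xstar + g xstar) ≤ ⟪p, G⟫ + αk * ⟪G, w⟫ := by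
    nlinarith [hA, hB, hC, e1]
  rw [h1, h2]
  nlinarith [key, mul_nonneg (sq_nonneg αk) (sq_nonneg ‖w‖),
    mul_le_mul_of_nonneg_left key hαk.le]
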